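/- For every prime p ≥ 5 and integer n ≥ 1, the divisor polynomial of the n-th power of the weight p−1 Eisenstein series satisfies F(E_{p−1}ⁿ; x) ≡ F(E_{p−1}; x)ⁿ · x^{δ_p·⌊n/3⌋} · (x − 1728)^{ε_p·⌊n/2⌋} in 𝔽_p[x]. -/

import Mathlib

set_option maxHeartbeats 1000000


open scoped UpperHalfPlane
open Complex Polynomial

noncomputable section

namespace SSTrace

/-- `q = exp(2πiz)`. -/
def qq (z : ℍ) : ℂ := Complex.exp (2 * Real.pi * Complex.I * (z : ℂ))

/-- The divisor-sum function `σ_k(n)`. -/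
def sigma (k n : ℕ) : ℕ := ∑ d ∈ n.divisors, d ^ k

/-- The normalized Eisenstein series of weight `k`, given by its `q`-expansion
`E_k = 1 - (2k/B_k) ∑_{n ≥ 1} σ_{k-1}(n) qⁿ`. -/
def Eis (k : ℕ) : ℍ → ℂ :=
  fun z => 1 - (2 * k / ((bernoulli' k : ℚ) : ℂ)) *
    ∑' n : ℕ, (sigma (k - 1) (n + 1) : ℂ) * qq z ^ (n + 1)

/-- The normalized Eisenstein series `E₄`. -/
def E4 : ℍ → ℂ := Eis 4

/-- The normalized Eisenstein series `E₆`. -/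
def E6 : ℍ → ℂ := Eis 6

/-- The discriminant cusp form `Δ = (E₄³ - E₆²)/1728`. -/
def Disc : ℍ → ℂ := fun z => (E4 z ^ 3 - E6 z ^ 2) / 1728

/-- The modular `j`-function `j = E₄³/Δ`. -/
def jFun : ℍ → ℂ := fun z => E4 z ^ 3 / Disc z

/-- `δ(w) ∈ {0,1,2}` according as `w ≡ 0, 4, 2 (mod 6)` (for even `w`). -/
def deltaExp (w : ℕ) : ℕ := if w % 6 = 0 then 0 else if w % 6 = 4 then 1 else 2

/-- `ε(w) ∈ {0,1}` according as `w ≡ 0, 2 (mod 4)` (for even `w`). -/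
def epsExp (w : ℕ) : ℕ := if w % 4 = 0 then 0 else 1

/-- `m(w)` with `w = 12·m(w) + 4·δ(w) + 6·ε(w)`. -/
def mExp (w : ℕ) : ℕ := (w - 4 * deltaExp w - 6 * epsExp w) / 12

/-- `HasDivPoly w f F` says that the weight-`w` modular form `f` decomposes as
`f = Δ^m E₄^δ E₆^ε F(j)`, i.e. that `F` is the divisor polynomial of `f`. -/
def HasDivPoly (w : ℕ) (f : ℍ → ℂ) (F : Polynomial ℂ) : Prop :=
  ∀ z : ℍ, f z = Disc z ^ mExp w * E4 z ^ deltaExp w * E6 z ^ epsExp w * F.eval (jFun z)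

/-- `δ_p`: `0` if `p ≡ 1 (mod 3)`, `1` if `p ≡ 2 (mod 3)`. -/
def deltaP (p : ℕ) : ℕ := if p % 3 = 1 then 0 else 1

/-- `ε_p`: `0` if `p ≡ 1 (mod 4)`, `1` if `p ≡ 3 (mod 4)`. -/
def epsP (p : ℕ) : ℕ := if p % 4 = 1 then 0 else 1

/-- A rational number is `p`-integral. -/
def PInt (p : ℕ) (x : ℚ) : Prop := ∃ a b : ℤ, ((b : ZMod p) ≠ 0) ∧ x = (a : ℚ) / b

/-- Two rational numbers are congruent modulo `p` (their difference is `p` times a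
`p`-integral rational). -/
def QCongr (p : ℕ) (x y : ℚ) : Prop :=
  ∃ a b : ℤ, ((b : ZMod p) ≠ 0) ∧ x - y = p * (a : ℚ) / b

/- AUX SECTION -/
section Aux
open Finset

theorem bernoulli'_five : bernoulli' 5 = 0 := by
  have h1 : Nat.choose 5 2 = 10 := by decide
  have h2 : Nat.choose 5 3 = 10 := by decide
  rw [bernoulli'_def]
  norm_num [Finset.sum_range_succ, Finset.sum_range_zero, h1, h2]

theorem bernoulli'_six : bernoulli' 6 = 1 / 42 := by
  have h1 : Nat.choose 6 2 = 15 := by decide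
  have h2 : Nat.choose 6 3 = 20 := by decide
  have h3 : Nat.choose 6 4 = 15 := by decide
  rw [bernoulli'_def]
  norm_num [Finset.sum_range_succ, Finset.sum_range_zero, h1, h2, h3, bernoulli'_five]

/-! Arithmetic lemmas -/

lemma arithA {p n : ℕ} (h2 : p % 2 = 1) (h3 : p % 3 ≠ 0) (h5 : 5 ≤ p) (hn : 1 ≤ n) :
    n * deltaExp (p-1) = deltaExp (n*(p-1)) + 3*(deltaP p * (n/3)) := by
  have hm6 : (n*(p-1)) % 6 = n % 6 * ((p-1)%6) % 6 := Nat.mul_mod _ _ _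
  have h : (p-1) % 6 = 0 ∨ (p-1)%6 = 4 := by omega
  simp only [deltaExp, deltaP]
  rcases h with h|h <;> rw [h] at hm6 <;> split_ifs <;> omega

lemma arithB {p n : ℕ} (h2 : p % 2 = 1) (h3 : p % 3 ≠ 0) (h5 : 5 ≤ p) (hn : 1 ≤ n) :
    n * epsExp (p-1) = epsExp (n*(p-1)) + 2*(epsP p * (n/2)) := by
  have hm4 : (n*(p-1)) % 4 = n % 4 * ((p-1)%4) % 4 := Nat.mul_mod _ _ _
  have h : (p-1) % 4 = 0 ∨ (p-1)%4 = 2 := by omega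
  simp only [epsExp, epsP]
  rcases h with h|h <;> rw [h] at hm4 <;> split_ifs <;> omega

lemma arithC {p n : ℕ} (h2 : p % 2 = 1) (h3 : p % 3 ≠ 0) (h5 : 5 ≤ p) (hn : 1 ≤ n) :
    (p-1) = 12 * mExp (p-1) + 4*deltaExp (p-1) + 6*epsExp (p-1) := by
  simp only [deltaExp, epsExp, mExp]
  split_ifs <;> omega

lemma arithD {p n : ℕ} (h2 : p % 2 = 1) (h3 : p % 3 ≠ 0) (h5 : 5 ≤ p) (hn : 1 ≤ n) :
    n*(p-1) = 12 * mExp (n*(p-1)) + 4*deltaExp (n*(p-1)) + 6*epsExp (n*(p-1)) := by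
  have hm6 : (n*(p-1)) % 6 = n % 6 * ((p-1)%6) % 6 := Nat.mul_mod _ _ _
  have hm4 : (n*(p-1)) % 4 = n % 4 * ((p-1)%4) % 4 := Nat.mul_mod _ _ _
  have hge : (p-1) ≤ n * (p-1) := Nat.le_mul_of_pos_left _ (by omega)
  have h6 : (p-1) % 6 = 0 ∨ (p-1)%6 = 4 := by omega
  have h4 : (p-1) % 4 = 0 ∨ (p-1)%4 = 2 := by omega
  simp only [deltaExp, epsExp, mExp]
  rcases h6 with h6|h6 <;> rcases h4 with h4|h4 <;> rw [h6] at hm6 <;> rw [h4] at hm4 <;>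
    split_ifs <;> omega

lemma arithM {p n : ℕ} (h2 : p % 2 = 1) (h3 : p % 3 ≠ 0) (h5 : 5 ≤ p) (hn : 1 ≤ n) :
    mExp (n*(p-1)) = n * mExp (p-1) + deltaP p * (n/3) + epsP p * (n/2) := by
  have hA := arithA h2 h3 h5 hn
  have hB := arithB h2 h3 h5 hn
  have hC := arithC (n := n) h2 h3 h5 hn
  have hD := arithD h2 h3 h5 hn
  have hC' : n * (p-1) = 12 * (n * mExp (p-1)) + 4*(n * deltaExp (p-1)) + 6*(n * epsExp (p-1)) := by
    conv_lhs => rw [hC]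
    ring
  generalize n * (p-1) = X at hA hB hC' hD ⊢
  generalize n * mExp (p-1) = Q at hC' ⊢
  generalize n * deltaExp (p-1) = A1 at hA hC'
  generalize n * epsExp (p-1) = B1 at hB hC'
  generalize deltaP p * (n/3) = s at hA ⊢
  generalize epsP p * (n/2) = t at hB ⊢
  omega

/-! Series estimates -/

lemma sigma_le (k m : ℕ) : sigma k m ≤ m ^ (k+1) := by
  rcases Nat.eq_zero_or_pos m with rfl|hm
  · simp [sigma]
  · calc sigma k m ≤ ∑ _d ∈ m.divisors, m ^ k := by
          apply Finset.sum_le_sum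
          intro d hd
          exact Nat.pow_le_pow_left (Nat.le_of_dvd hm (Nat.mem_divisors.mp hd).1) k
    _ = m.divisors.card * m ^ k := by rw [Finset.sum_const, smul_eq_mul]
    _ ≤ m * m ^ k := by
          gcongr
          calc m.divisors.card ≤ (Finset.Icc 1 m).card := by
                apply Finset.card_le_card
                intro d hd
                rw [Finset.mem_Icc]
                exact ⟨Nat.pos_of_mem_divisors hd, Nat.le_of_dvd hm (Nat.mem_divisors.mp hd).1⟩
          _ = m := by simp
    _ = m ^ (k+1) := by ring

lemma summable_shift (K : ℕ) {t : ℝ} (h0 : 0 ≤ t) (h1 : t < 1) :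
    Summable (fun n : ℕ => ((n+2:ℕ):ℝ)^K * t^(n+2)) := by
  have := summable_pow_mul_geometric_of_norm_lt_one (r := t) K
    (by rwa [Real.norm_eq_abs, _root_.abs_of_nonneg h0])
  have h2 := (summable_nat_add_iff (f := fun n : ℕ => (n:ℝ)^K * t^n) 2).mpr this
  exact h2.congr (fun n => by push_cast; ring)

lemma summable_half (K : ℕ) : Summable (fun n : ℕ => ((n+2:ℕ):ℝ)^K * (1/2)^n) := by
  have := (summable_shift K (t := 1/2) (by norm_num) (by norm_num)).mul_left 4
  exact this.congr (fun n => by push_cast; ring)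

noncomputable def Sr (k : ℕ) (t : ℝ) : ℝ := ∑' n : ℕ, (sigma k (n+1) : ℝ) * t^(n+1)
noncomputable def CkC (k : ℕ) : ℝ := ∑' n : ℕ, ((n+2:ℕ):ℝ)^(k+1) * (1/2)^n

lemma CkC_nonneg (k : ℕ) : 0 ≤ CkC k :=
  tsum_nonneg (fun n => by positivity)

lemma sigma_one (k : ℕ) : sigma k 1 = 1 := by simp [sigma]

lemma summable_Sr (k : ℕ) {t : ℝ} (h0 : 0 ≤ t) (h1 : t < 1) :
    Summable (fun n : ℕ => (sigma k (n+1) : ℝ) * t^(n+1)) := by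
  apply Summable.of_nonneg_of_le (f := fun n : ℕ => ((n+1:ℕ):ℝ)^(k+1) * t^(n+1))
  · intro n; positivity
  · intro n
    apply mul_le_mul_of_nonneg_right _ (by positivity)
    exact_mod_cast sigma_le k (n+1)
  · have := summable_pow_mul_geometric_of_norm_lt_one (r := t) (k+1)
      (by rwa [Real.norm_eq_abs, _root_.abs_of_nonneg h0])
    have h2 := (summable_nat_add_iff (f := fun n : ℕ => (n:ℝ)^(k+1) * t^n) 1).mpr this
    exact h2.congr (fun n => by push_cast; ring)

lemma Sr_lower (k : ℕ) {t : ℝ} (h0 : 0 ≤ t) (h1 : t < 1) : t ≤ Sr k t := by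
  have hs := summable_Sr k h0 h1
  have := Summable.le_tsum hs 0 (fun i _ => by positivity)
  simpa [sigma_one, Sr] using this

lemma Sr_upper (k : ℕ) {t : ℝ} (h0 : 0 ≤ t) (h1 : t ≤ 1/2) : Sr k t ≤ t + CkC k * t^2 := by
  have h1' : t < 1 := by linarith
  have hs := summable_Sr k h0 h1'
  rw [Sr, Summable.tsum_eq_zero_add hs]
  simp only [pow_one, sigma_one, Nat.cast_one, one_mul, zero_add]
  gcongr
  have hmaj : Summable (fun n : ℕ => (((n+2:ℕ):ℝ)^(k+1) * (1/2)^n) * t^2) :=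
    (summable_half (k+1)).mul_right _
  have hlhs : Summable (fun n : ℕ => ((sigma k (n+1+1):ℕ):ℝ) * t^(n+1+1)) := by
    have := (summable_nat_add_iff (f := fun n : ℕ => ((sigma k (n+1):ℕ):ℝ) * t^(n+1)) 1).mpr hs
    exact this
  have hle : ∀ n : ℕ, ((sigma k (n+1+1):ℕ):ℝ) * t^(n+1+1) ≤ (((n+2:ℕ):ℝ)^(k+1) * (1/2)^n) * t^2 := by
    intro n
    have e1 : n+1+1 = n+2 := by ring
    rw [e1]
    have b1 : ((sigma k (n+2):ℕ):ℝ) ≤ ((n+2:ℕ):ℝ)^(k+1) := by exact_mod_cast sigma_le k (n+2)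
    have b2 : t^n ≤ (1/2:ℝ)^n := pow_le_pow_left₀ h0 h1 n
    have e2 : t^(n+2) = t^n * t^2 := by ring
    rw [e2]
    calc ((sigma k (n+2):ℕ):ℝ) * (t^n * t^2) ≤ ((n+2:ℕ):ℝ)^(k+1) * (t^n * t^2) := by
          apply mul_le_mul_of_nonneg_right b1 (by positivity)
      _ ≤ ((n+2:ℕ):ℝ)^(k+1) * ((1/2:ℝ)^n * t^2) := by
          apply mul_le_mul_of_nonneg_left _ (by positivity)
          apply mul_le_mul_of_nonneg_right b2 (by positivity)
      _ = (((n+2:ℕ):ℝ)^(k+1) * (1/2)^n) * t^2 := by ring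
  calc (∑' n : ℕ, ((sigma k (n+1+1):ℕ):ℝ) * t^(n+1+1))
      ≤ ∑' n : ℕ, (((n+2:ℕ):ℝ)^(k+1) * (1/2)^n) * t^2 := Summable.tsum_le_tsum hle hlhs hmaj
    _ = CkC k * t^2 := by rw [tsum_mul_right]; rfl

/-! Real Eisenstein values -/

noncomputable def E4r (t : ℝ) : ℝ := 1 + 240 * Sr 3 t
noncomputable def E6r (t : ℝ) : ℝ := 1 - 504 * Sr 5 t
noncomputable def Dr (t : ℝ) : ℝ := (E4r t ^ 3 - E6r t ^ 2) / 1728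
noncomputable def jr (t : ℝ) : ℝ := E4r t ^ 3 / Dr t
noncomputable def Dconst : ℝ := (7*(240*(1+CkC 3)) + 2*(504*(1+CkC 5)))/1728
noncomputable def t00 : ℝ := min (1/2) (min ((1/1008)/(1+CkC 5)) (min ((1/480)/(1+CkC 3)) (1/294)))

lemma Dconst_pos : 0 < Dconst := by
  have h3 := CkC_nonneg 3; have h5 := CkC_nonneg 5
  rw [Dconst]; positivity

lemma t00_pos : 0 < t00 := by
  have h3 := CkC_nonneg 3; have h5 := CkC_nonneg 5
  rw [t00]
  refine lt_min (by norm_num) (lt_min (by positivity) (lt_min (by positivity) (by norm_num)))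

lemma t00_le_half : t00 ≤ 1/2 := min_le_left _ _

lemma aux_cube {a x : ℝ} (hx0 : 0 ≤ x) (hx : x ≤ 1/2) (ha0 : 0 ≤ a) (ha : a ≤ 1+x) :
    a^3 ≤ 1+7*x := by nlinarith [pow_le_pow_left₀ ha0 ha 3, sq_nonneg x, mul_nonneg hx0 hx0]

lemma aux_sq {b x : ℝ} (hx0 : 0 ≤ x) (hx : x ≤ 1/2) (hb : 1-x ≤ b) : 1-2*x ≤ b^2 := by
  nlinarith [pow_le_pow_left₀ (by linarith : (0:ℝ) ≤ 1-x) hb 2, sq_nonneg x]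

lemma key_bounds {t : ℝ} (ht0 : 0 < t) (ht : t ≤ t00) :
    1 ≤ E4r t ∧ (1:ℝ)/2 ≤ E6r t ∧ t/2 ≤ Dr t ∧ Dr t ≤ Dconst * t ∧ 1/(Dconst * t) ≤ jr t := by
  have hc3 := CkC_nonneg 3; have hc5 := CkC_nonneg 5
  have ht2 : t ≤ 1/2 := le_trans ht (min_le_left _ _)
  have ht5 : t ≤ (1/1008)/(1+CkC 5) := le_trans ht (le_trans (min_le_right _ _) (min_le_left _ _))
  have ht3 : t ≤ (1/480)/(1+CkC 3) :=
    le_trans ht (le_trans (min_le_right _ _) (le_trans (min_le_right _ _) (min_le_left _ _)))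
  have ht294 : t ≤ 1/294 :=
    le_trans ht (le_trans (min_le_right _ _) (le_trans (min_le_right _ _) (min_le_right _ _)))
  have h1 : t < 1 := by linarith
  have hp5 : (1+CkC 5) * t ≤ 1/1008 := by
    calc (1+CkC 5)*t ≤ (1+CkC 5) * ((1/1008)/(1+CkC 5)) := by
          apply mul_le_mul_of_nonneg_left ht5 (by positivity)
      _ = 1/1008 := by rw [mul_comm, div_mul_cancel₀ _ (by positivity : (1+CkC 5) ≠ 0)]
  have hp3 : (1+CkC 3) * t ≤ 1/480 := by
    calc (1+CkC 3)*t ≤ (1+CkC 3) * ((1/480)/(1+CkC 3)) := by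
          apply mul_le_mul_of_nonneg_left ht3 (by positivity)
      _ = 1/480 := by rw [mul_comm, div_mul_cancel₀ _ (by positivity : (1+CkC 3) ≠ 0)]
  have hS3l := Sr_lower 3 (le_of_lt ht0) h1
  have hS3u := Sr_upper 3 (le_of_lt ht0) ht2
  have hS5l := Sr_lower 5 (le_of_lt ht0) h1
  have hS5u := Sr_upper 5 (le_of_lt ht0) ht2
  have htsq : t^2 ≤ t := by nlinarith
  have hS3u' : Sr 3 t ≤ (1 + CkC 3) * t := by nlinarith [mul_le_mul_of_nonneg_left htsq hc3]
  have hS5u' : Sr 5 t ≤ (1 + CkC 5) * t := by nlinarith [mul_le_mul_of_nonneg_left htsq hc5]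
  have hA1 : 1 + 240*t ≤ E4r t := by rw [E4r]; nlinarith
  have hA2 : E4r t ≤ 1 + 240*((1+CkC 3)*t) := by rw [E4r]; nlinarith
  have hA2' : 240*((1+CkC 3)*t) ≤ 1/2 := by nlinarith
  have hB2 : E6r t ≤ 1 - 504*t := by rw [E6r]; nlinarith
  have hB1 : 1 - 504*((1+CkC 5)*t) ≤ E6r t := by rw [E6r]; nlinarith
  have hB1' : 504*((1+CkC 5)*t) ≤ 1/2 := by nlinarith
  have hB6 : (1:ℝ)/2 ≤ E6r t := by nlinarith
  have hA4 : 1 ≤ E4r t := by nlinarith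
  have hA40 : (0:ℝ) ≤ E4r t := by linarith
  have hDlow : t/2 ≤ Dr t := by
    have ha3 : (1+240*t)^3 ≤ E4r t ^3 := pow_le_pow_left₀ (by positivity) hA1 3
    have hb2 : E6r t ^2 ≤ (1-504*t)^2 := pow_le_pow_left₀ (by linarith) hB2 2
    rw [Dr]
    nlinarith [pow_nonneg (le_of_lt ht0) 3, pow_nonneg (le_of_lt ht0) 2]
  have hDup : Dr t ≤ Dconst * t := by
    have h7x : E4r t ^3 ≤ 1 + 7*(240*((1+CkC 3)*t)) :=
      aux_cube (by positivity) hA2' hA40 hA2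
    have h2y : 1 - 2*(504*((1+CkC 5)*t)) ≤ E6r t ^2 :=
      aux_sq (by positivity) hB1' hB1
    rw [Dr, Dconst]
    linarith [h7x, h2y]
  refine ⟨hA4, hB6, hDlow, hDup, ?_⟩
  have hDpos : 0 < Dr t := by linarith
  rw [jr]
  calc 1/(Dconst * t) ≤ 1/(Dr t) := one_div_le_one_div_of_le hDpos hDup
    _ ≤ E4r t ^3 / Dr t := by
        rw [div_le_div_iff₀ hDpos hDpos]
        nlinarith [pow_le_pow_left₀ (by norm_num : (0:ℝ) ≤ 1) hA4 3]

lemma jr_unbounded (M : ℝ) : ∃ t : ℝ, 0 < t ∧ t ≤ t00 ∧ M < jr t := by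
  have hD := Dconst_pos
  set s : ℝ := min t00 (1/(Dconst*(|M|+1))) with hs
  have hMpos : (0:ℝ) < |M| + 1 := by positivity
  have hspos : 0 < s := lt_min t00_pos (by positivity)
  have hsle : s ≤ t00 := min_le_left _ _
  refine ⟨s, hspos, hsle, ?_⟩
  obtain ⟨_, _, _, _, hj⟩ := key_bounds hspos hsle
  have h1 : Dconst * s ≤ 1/(|M|+1) := by
    have : s ≤ 1/(Dconst*(|M|+1)) := min_le_right _ _
    calc Dconst * s ≤ Dconst * (1/(Dconst*(|M|+1))) := by
          apply mul_le_mul_of_nonneg_left this (le_of_lt hD)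
      _ = 1/(|M|+1) := by field_simp
  have h2 : |M|+1 ≤ 1/(Dconst * s) := by
    rw [le_one_div (by positivity) (by positivity)]
    exact h1
  have h3 : M < |M| + 1 := by
    have := le_abs_self M
    linarith
  linarith

/-! Complex side -/

lemma exists_z {t : ℝ} (h0 : 0 < t) (h1 : t < 1) : ∃ z : ℍ, qq z = (t:ℂ) := by
  have hπ : (0:ℝ) < Real.pi := Real.pi_pos
  set y : ℝ := -(Real.log t) / (2*Real.pi) with hy
  have hyp : 0 < y := by
    apply div_pos _ (by positivity)
    have := Real.log_neg h0 h1
    linarith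
  refine ⟨⟨(y:ℂ) * Complex.I, by simpa using hyp⟩, ?_⟩
  show Complex.exp (2 * (Real.pi:ℂ) * Complex.I * ((y:ℂ) * Complex.I)) = (t:ℂ)
  have h2 : 2 * (Real.pi:ℂ) * Complex.I * ((y:ℂ) * Complex.I) = ((-(2 * Real.pi * y) : ℝ) : ℂ) := by
    have hI : Complex.I * Complex.I = -1 := Complex.I_mul_I
    push_cast
    linear_combination (2*(Real.pi:ℂ)*(y:ℂ)) * hI
  rw [h2, ← Complex.ofReal_exp]
  norm_cast
  rw [show -(2*Real.pi*y) = Real.log t by rw [hy]; field_simp]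
  exact Real.exp_log h0

lemma tsum_ofReal (k : ℕ) (t : ℝ) :
    ∑' n : ℕ, ((sigma k (n+1) : ℕ):ℂ) * (t:ℂ)^(n+1) = ((Sr k t : ℝ) : ℂ) := by
  rw [Sr, Complex.ofReal_tsum]
  congr 1; funext n; push_cast; ring

lemma Eis_eq (k : ℕ) (z : ℍ) {t : ℝ} (hq : qq z = (t:ℂ)) :
    Eis k z = (((1 - (2*k/((bernoulli' k : ℚ):ℝ)) * Sr (k-1) t) : ℝ) : ℂ) := by
  rw [Eis, hq, tsum_ofReal (k-1) t]
  push_cast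
  ring

lemma E4_eq (z : ℍ) {t : ℝ} (hq : qq z = (t:ℂ)) : E4 z = ((E4r t : ℝ) : ℂ) := by
  rw [E4, Eis_eq 4 z hq, E4r]
  norm_num [bernoulli'_four]

lemma E6_eq (z : ℍ) {t : ℝ} (hq : qq z = (t:ℂ)) : E6 z = ((E6r t : ℝ) : ℂ) := by
  rw [E6, Eis_eq 6 z hq, E6r]
  norm_num [bernoulli'_six]

lemma Disc_eq (z : ℍ) {t : ℝ} (hq : qq z = (t:ℂ)) : Disc z = ((Dr t : ℝ) : ℂ) := by
  rw [Disc, E4_eq z hq, E6_eq z hq, Dr]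
  push_cast
  ring

lemma jFun_eq (z : ℍ) {t : ℝ} (hq : qq z = (t:ℂ)) : jFun z = ((jr t : ℝ) : ℂ) := by
  rw [jFun, E4_eq z hq, Disc_eq z hq, jr]
  push_cast
  ring

end Aux

/-- Proposition 3.2: for `p ≥ 5` prime and `n ≥ 1`,
`F(E_{p-1}ⁿ;x) ≡ F(E_{p-1};x)ⁿ · x^{δ_p⌊n/3⌋} · (x-1728)^{ε_p⌊n/2⌋}` in `𝔽_p[x]`. -/
theorem divPoly_eisenstein_pow (p : ℕ) [Fact p.Prime] (hp : 5 ≤ p) (n : ℕ) (hn : 1 ≤ n)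
    (F Fn : Polynomial ℚ)
    (hF : HasDivPoly (p - 1) (Eis (p - 1)) (F.map (algebraMap ℚ ℂ)))
    (hFn : HasDivPoly (n * (p - 1)) (fun z => Eis (p - 1) z ^ n) (Fn.map (algebraMap ℚ ℂ))) :
    ∀ i : ℕ, QCongr p (Fn.coeff i)
      ((F ^ n * X ^ (deltaP p * (n / 3)) *
        (X - C (1728 : ℚ)) ^ (epsP p * (n / 2))).coeff i) := by
  have hprime : p.Prime := Fact.out
  have h2 : p % 2 = 1 := Nat.odd_iff.mp (hprime.odd_of_ne_two (by omega))
  have h3 : p % 3 ≠ 0 := by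
    intro h
    have h' : (3:ℕ) ∣ p := Nat.dvd_of_mod_eq_zero h
    have := (Nat.prime_dvd_prime_iff_eq (by norm_num) hprime).mp h'
    omega
  have hA := arithA h2 h3 hp hn
  have hB := arithB h2 h3 hp hn
  have hM := arithM h2 h3 hp hn
  set φ : ℚ →+* ℂ := algebraMap ℚ ℂ with hφ
  set H : Polynomial ℚ :=
    F ^ n * X ^ (deltaP p * (n / 3)) * (X - C (1728 : ℚ)) ^ (epsP p * (n / 2)) with hH
  suffices hFnH : Fn = H by
    intro i
    rw [hFnH]
    haveI : Fact (1 < p) := ⟨by omega⟩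
    exact ⟨0, 1, by simp, by simp⟩
  -- roots at the j-values
  have hroot : ∀ t : ℝ, 0 < t → t ≤ t00 → ((Fn - H).map φ).IsRoot ((jr t : ℝ):ℂ) := by
    intro t ht0 htle
    obtain ⟨hA4, hB6, hDlow, hDup, hjlow⟩ := key_bounds ht0 htle
    obtain ⟨z, hz⟩ := exists_z ht0 (lt_of_le_of_lt htle (lt_of_le_of_lt t00_le_half (by norm_num)))
    have hE4 : E4 z = ((E4r t : ℝ) : ℂ) := E4_eq z hz
    have hE6 : E6 z = ((E6r t : ℝ) : ℂ) := E6_eq z hz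
    have hDisc : Disc z = ((Dr t : ℝ) : ℂ) := Disc_eq z hz
    have hj : jFun z = ((jr t : ℝ) : ℂ) := jFun_eq z hz
    have hDne : Disc z ≠ 0 := by
      rw [hDisc]
      exact_mod_cast ne_of_gt (lt_of_lt_of_le (by positivity) hDlow)
    have hE4ne : E4 z ≠ 0 := by
      rw [hE4]
      exact_mod_cast ne_of_gt (lt_of_lt_of_le (by norm_num) hA4)
    have hE6ne : E6 z ≠ 0 := by
      rw [hE6]
      exact_mod_cast ne_of_gt (lt_of_lt_of_le (by norm_num) hB6)
    have h4cube : E4 z ^ 3 = Disc z * jFun z := by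
      rw [jFun]
      field_simp
    have hsubne : E4 z ^ 3 - E6 z ^ 2 ≠ 0 := by
      intro h
      apply hDne
      rw [Disc, h]
      simp
    have h6sq : E6 z ^ 2 = Disc z * (jFun z - 1728) := by
      rw [jFun, Disc]
      field_simp
      ring
    have hFz := hF z
    have hFnz := hFn z
    have key : Disc z ^ (mExp (n*(p-1))) * E4 z ^ (deltaExp (n*(p-1))) * E6 z ^ (epsExp (n*(p-1)))
          * ((Fn.map φ).eval (jFun z))
        = Disc z ^ (mExp (n*(p-1))) * E4 z ^ (deltaExp (n*(p-1))) * E6 z ^ (epsExp (n*(p-1)))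
          * (((F.map φ).eval (jFun z))^n * jFun z ^ (deltaP p * (n / 3))
              * (jFun z - 1728) ^ (epsP p * (n / 2))) := by
      rw [← hFnz]
      calc Eis (p-1) z ^ n
          = (Disc z ^ mExp (p-1) * E4 z ^ deltaExp (p-1) * E6 z ^ epsExp (p-1)
              * ((F.map φ).eval (jFun z)))^n := by rw [hFz]
        _ = Disc z ^ (n * mExp (p-1)) * E4 z ^ (n * deltaExp (p-1)) * E6 z ^ (n * epsExp (p-1))
              * ((F.map φ).eval (jFun z))^n := by
            rw [mul_pow, mul_pow, mul_pow, ← pow_mul, ← pow_mul, ← pow_mul,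
              Nat.mul_comm (mExp (p-1)) n, Nat.mul_comm (deltaExp (p-1)) n,
              Nat.mul_comm (epsExp (p-1)) n]
        _ = _ := by
            rw [hA, hB, hM]
            rw [pow_add (E4 z), pow_add (E6 z), pow_mul (E4 z) 3, pow_mul (E6 z) 2, h4cube, h6sq, mul_pow, mul_pow]
            ring
    have hcancel := mul_left_cancel₀
      (mul_ne_zero (mul_ne_zero (pow_ne_zero _ hDne) (pow_ne_zero _ hE4ne))
        (pow_ne_zero _ hE6ne)) key
    show ((Fn - H).map φ).eval ((jr t : ℝ):ℂ) = 0
    rw [← hj]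
    have h1728 : φ (1728:ℚ) = (1728:ℂ) := by simp [hφ]
    simp only [hH, Polynomial.map_sub, Polynomial.map_mul, Polynomial.map_pow,
      Polynomial.map_X, Polynomial.map_C, Polynomial.eval_sub, Polynomial.eval_mul,
      Polynomial.eval_pow, Polynomial.eval_X, Polynomial.eval_C, h1728]
    rw [hcancel]
    ring
  -- infinitely many roots
  have hGmap : (Fn - H).map φ = 0 := by
    apply Polynomial.eq_zero_of_infinite_isRoot
    have hsub : (fun t : ℝ => ((jr t : ℝ):ℂ)) '' (Set.Ioc 0 t00)
        ⊆ {x | ((Fn - H).map φ).IsRoot x} := by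
      rintro x ⟨t, ht, rfl⟩
      exact hroot t ht.1 ht.2
    apply Set.Infinite.mono hsub
    have hrinf : (jr '' Set.Ioc 0 t00).Infinite := by
      intro hfin
      have hbdd : BddAbove (jr '' Set.Ioc 0 t00) := hfin.bddAbove
      obtain ⟨M, hM⟩ := hbdd
      obtain ⟨t, ht0, htle, hMt⟩ := jr_unbounded M
      have : jr t ≤ M := hM ⟨t, ⟨ht0, htle⟩, rfl⟩
      linarith
    have : (fun t : ℝ => ((jr t : ℝ):ℂ)) '' (Set.Ioc 0 t00)
        = (fun x : ℝ => (x:ℂ)) '' (jr '' Set.Ioc 0 t00) := by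
      rw [Set.image_image]
    rw [this]
    exact hrinf.image (fun x _ y _ h => Complex.ofReal_injective h)
  have : Fn - H = 0 := by
    have hinj : Function.Injective φ := φ.injective
    exact (Polynomial.map_eq_zero_iff hinj).mp hGmap
  have hFnH : Fn = H := by
    have := sub_eq_zero.mp this
    exact this
  exact hFnH


end SSTrace
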